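/- For any normal default structure (A, Con, Δ) with trivial entailment, the triple (A, Con, |~_A), where |~_A is the skeptical nonmonotonic consequence relation, is an abstract nonmonotonic system; that is, it satisfies: (1) X ⊆ Y and Y ∈ Con imply X ∈ Con; (2) {a} ∈ Con for every a ∈ A; (3) X |~_A T implies X ∪ T ∈ Con; (4) Y ⊆ X and X ∈ Con imply X |~_A Y; (5) X |~_A T and X ∪ T |~_A Y imply X |~_A Y; (6) X |~_A Y and X |~_A Z imply X |~_A Y ∪ Z. -/

import Mathlib

/-- A set is consistent if every finite subset of it lies in Con. -/
def IsCons {α : Type*} (Con : Set α → Prop) (S : Set α) : Prop :=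
  ∀ X : Set α, X ⊆ S → X.Finite → Con X

/-- With trivial entailment: φ(x, S, 0) = x and
φ(x, S, i+1) = φ(x, S, i) ∪ {a | (X, a) ∈ Δ, X ⊆ φ(x, S, i), {a} ∪ S consistent}. -/
def phiT {α : Type*} (Con : Set α → Prop) (Δ : Set (Set α × α)) (x S : Set α) :
    ℕ → Set α
  | 0 => x
  | i + 1 =>
      phiT Con Δ x S i ∪
        {a | ∃ X : Set α, (X, a) ∈ Δ ∧ X ⊆ phiT Con Δ x S i ∧ IsCons Con ({a} ∪ S)}

/-- Φ(x, S) = ⋃_{i≥0} φ(x, S, i). -/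
def PhiT {α : Type*} (Con : Set α → Prop) (Δ : Set (Set α × α)) (x S : Set α) : Set α :=
  ⋃ i, phiT Con Δ x S i

/-- A consistent set y is an extension of x (x ε y) if Φ(x, y) = y. -/
def ExtT {α : Type*} (Con : Set α → Prop) (Δ : Set (Set α × α)) (x y : Set α) : Prop :=
  IsCons Con y ∧ PhiT Con Δ x y = y

/-- Skeptical nonmonotonic consequence: X |~ a iff a belongs to every extension of X. -/
def Nmc {α : Type*} (Con : Set α → Prop) (Δ : Set (Set α × α)) (X : Set α) (a : α) : Prop :=
  ∀ y : Set α, ExtT Con Δ X y → a ∈ y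

/-- X |~ Y iff X |~ b for every b ∈ Y. -/
def NmcS {α : Type*} (Con : Set α → Prop) (Δ : Set (Set α × α)) (X Y : Set α) : Prop :=
  ∀ b ∈ Y, Nmc Con Δ X b

open Set

section Aux

variable {α : Type*} (Con : Set α → Prop) (Δ : Set (Set α × α))

/-- Grounding stages: like phiT but only adds elements already in z,
so consistency checks are automatic. -/
def psiA (x z : Set α) : ℕ → Set α
  | 0 => x
  | n + 1 => psiA x z n ∪ {a | a ∈ z ∧ ∃ W, (W, a) ∈ Δ ∧ W ⊆ psiA x z n}

variable {Con Δ}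

lemma psiA_mono_z (x : Set α) {z z' : Set α} (h : z ⊆ z') :
    ∀ n, psiA Δ x z n ⊆ psiA Δ x z' n
  | 0 => subset_rfl
  | n + 1 => by
    rintro a (ha | ⟨haz, W, hW, hWs⟩)
    · exact Or.inl (psiA_mono_z x h n ha)
    · exact Or.inr ⟨h haz, W, hW, hWs.trans (psiA_mono_z x h n)⟩

lemma psiA_subset {x z : Set α} (hx : x ⊆ z) : ∀ n, psiA Δ x z n ⊆ z
  | 0 => hx
  | n + 1 => by
    rintro a (ha | ⟨haz, _⟩)
    · exact psiA_subset hx n ha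
    · exact haz

lemma psiA_mono_n (x z : Set α) : Monotone (psiA Δ x z) :=
  monotone_nat_of_le_succ fun _ => subset_union_left

lemma phiT_mono_n (x S : Set α) : Monotone (phiT Con Δ x S) :=
  monotone_nat_of_le_succ fun _ => subset_union_left

lemma phiT_mono_x {x x' : Set α} (S : Set α) (h : x ⊆ x') :
    ∀ n, phiT Con Δ x S n ⊆ phiT Con Δ x' S n
  | 0 => h
  | n + 1 => by
    rintro a (ha | ⟨W, hW, hWs, hc⟩)
    · exact Or.inl (phiT_mono_x S h n ha)
    · exact Or.inr ⟨W, hW, hWs.trans (phiT_mono_x S h n), hc⟩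

lemma x_subset_PhiT (x S : Set α) : x ⊆ PhiT Con Δ x S :=
  subset_iUnion (phiT Con Δ x S) 0

lemma finite_subset_iUnion_mono {f : ℕ → Set α} (hf : Monotone f) {W : Set α}
    (hfin : W.Finite) (h : W ⊆ ⋃ n, f n) : ∃ n, W ⊆ f n := by
  refine Set.Finite.induction_on (motive := fun W _ => W ⊆ (⋃ n, f n) → ∃ n, W ⊆ f n) W hfin
    (fun _ => ⟨0, empty_subset _⟩) ?_ h
  intro a s _ _ ih h
  obtain ⟨n, hn⟩ := ih ((subset_insert a s).trans h)
  obtain ⟨_, ⟨m, rfl⟩, ham⟩ := h (mem_insert a s)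
  exact ⟨max m n, insert_subset (hf (le_max_left m n) ham)
    (hn.trans (hf (le_max_right m n)))⟩

lemma finite_subset_sUnion_chain {c : Set (Set α)} (hc : IsChain (· ⊆ ·) c)
    (hne : c.Nonempty) {W : Set α} (hW : W.Finite) (h : W ⊆ ⋃₀ c) :
    ∃ z ∈ c, W ⊆ z := by
  refine Set.Finite.induction_on (motive := fun W _ => W ⊆ ⋃₀ c → ∃ z ∈ c, W ⊆ z) W hW
    (fun _ => hne.imp fun z hz => ⟨hz, empty_subset _⟩) ?_ h
  intro a s _ _ ih h
  obtain ⟨z, hzc, hsz⟩ := ih ((subset_insert a s).trans h)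
  obtain ⟨w, hwc, haw⟩ := h (mem_insert a s)
  rcases eq_or_ne z w with rfl | hne'
  · exact ⟨z, hzc, insert_subset haw hsz⟩
  rcases hc hzc hwc hne' with hzw | hwz
  · exact ⟨w, hwc, insert_subset haw (hsz.trans hzw)⟩
  · exact ⟨z, hzc, insert_subset (hwz haw) hsz⟩

lemma IsCons.mono {S S' : Set α} (h : S ⊆ S') (hS' : IsCons Con S') : IsCons Con S :=
  fun X hX hfin => hS' X (hX.trans h) hfin

/-- Existence of extensions for normal default theories with trivial entailment. -/
lemma ext_exists (hCfin : ∀ X : Set α, Con X → X.Finite)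
    (hDelta : ∀ p ∈ Δ, Con p.1) {X : Set α} (hX : IsCons Con X) :
    ∃ y, ExtT Con Δ X y := by
  classical
  set K : Set (Set α) :=
    {z | IsCons Con z ∧ X ⊆ z ∧ z ⊆ ⋃ n, psiA Δ X z n} with hK
  have hchain : ∀ c ⊆ K, IsChain (· ⊆ ·) c → c.Nonempty →
      ∃ ub ∈ K, ∀ s ∈ c, s ⊆ ub := by
    intro c hcK hc hne
    refine ⟨⋃₀ c, ⟨?_, ?_, ?_⟩, fun s hs => subset_sUnion_of_mem hs⟩
    · intro W hW hfin
      obtain ⟨z, hzc, hWz⟩ := finite_subset_sUnion_chain hc hne hfin hW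
      exact (hcK hzc).1 W hWz hfin
    · obtain ⟨z, hz⟩ := hne
      exact (hcK hz).2.1.trans (subset_sUnion_of_mem hz)
    · intro a ha
      obtain ⟨z, hzc, haz⟩ := ha
      obtain ⟨_, ⟨n, rfl⟩, han⟩ := (hcK hzc).2.2 haz
      exact mem_iUnion.2 ⟨n, psiA_mono_z X (subset_sUnion_of_mem hzc) n han⟩
  have hXK : X ∈ K := ⟨hX, subset_rfl, subset_iUnion (psiA Δ X X) 0⟩
  obtain ⟨y, _, hyK, hmax⟩ := zorn_subset_nonempty K hchain X hXK
  obtain ⟨hyCons, hXy, hyGr⟩ := hyK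
  -- y is an extension of X
  refine ⟨y, hyCons, Set.Subset.antisymm ?_ ?_⟩
  · -- PhiT ⊆ y, by showing each stage ⊆ y using maximality
    have key : ∀ n, phiT Con Δ X y n ⊆ y := by
      intro n
      induction n with
      | zero => exact hXy
      | succ n ih =>
        rintro a (ha | ⟨W, hW, hWs, hcons⟩)
        · exact ih ha
        · -- show insert a y ∈ K, conclude a ∈ y by maximality
          have hWfin : W.Finite := hCfin W (hDelta (W, a) hW)
          have hWy : W ⊆ y := hWs.trans ih
          have hins : insert a y ∈ K := by
            refine ⟨?_, hXy.trans (subset_insert a y), ?_⟩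
            · rw [← singleton_union]; exact hcons
            · intro b hb
              rcases hb with rfl | hby
              · -- b = a : derive from W
                obtain ⟨m, hm⟩ := finite_subset_iUnion_mono (psiA_mono_n X y)
                  hWfin (hWy.trans hyGr)
                exact mem_iUnion.2 ⟨m + 1, Or.inr ⟨mem_insert b y, W, hW,
                  hm.trans (psiA_mono_z X (subset_insert b y) m)⟩⟩
              · obtain ⟨_, ⟨n, rfl⟩, hbn⟩ := hyGr hby
                exact mem_iUnion.2 ⟨n, psiA_mono_z X (subset_insert a y) n hbn⟩
          exact hmax hins (subset_insert a y) (mem_insert a y)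
    exact iUnion_subset key
  · -- y ⊆ PhiT : groundedness plus consistency
    have key : ∀ n, psiA Δ X y n ⊆ PhiT Con Δ X y := by
      intro n
      induction n with
      | zero => exact x_subset_PhiT X y
      | succ n ih =>
        rintro a (ha | ⟨hay, W, hW, hWs⟩)
        · exact ih ha
        · have hcons : IsCons Con ({a} ∪ y) := by
            rw [union_eq_self_of_subset_left (singleton_subset_iff.2 hay)]
            exact hyCons
          have hWfin : W.Finite := hCfin W (hDelta (W, a) hW)
          obtain ⟨m, hm⟩ := finite_subset_iUnion_mono (phiT_mono_n X y)
            hWfin (hWs.trans ih)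
          exact mem_iUnion.2 ⟨m + 1, Or.inr ⟨W, hW, hm, hcons⟩⟩
    intro a ha
    obtain ⟨_, ⟨n, rfl⟩, han⟩ := hyGr ha
    exact key n han

/-- If y is an extension of X and T ⊆ y, then y is an extension of X ∪ T. -/
lemma ext_cut (hCfin : ∀ X : Set α, Con X → X.Finite)
    (hDelta : ∀ p ∈ Δ, Con p.1) {X T y : Set α} (h : ExtT Con Δ X y) (hT : T ⊆ y) :
    ExtT Con Δ (X ∪ T) y := by
  obtain ⟨hyCons, hPhi⟩ := h
  refine ⟨hyCons, Set.Subset.antisymm ?_ ?_⟩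
  · have key : ∀ n, phiT Con Δ (X ∪ T) y n ⊆ y := by
      intro n
      induction n with
      | zero =>
        exact union_subset (hPhi ▸ x_subset_PhiT X y) hT
      | succ n ih =>
        rintro a (ha | ⟨W, hW, hWs, hcons⟩)
        · exact ih ha
        · have hWy : W ⊆ ⋃ m, phiT Con Δ X y m := by
            rw [show (⋃ m, phiT Con Δ X y m) = PhiT Con Δ X y from rfl, hPhi]
            exact hWs.trans ih
          have hWfin : W.Finite := hCfin W (hDelta (W, a) hW)
          obtain ⟨m, hm⟩ := finite_subset_iUnion_mono (phiT_mono_n X y) hWfin hWy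
          rw [← hPhi]
          exact mem_iUnion.2 ⟨m + 1, Or.inr ⟨W, hW, hm, hcons⟩⟩
    exact iUnion_subset key
  · calc y = PhiT Con Δ X y := hPhi.symm
      _ ⊆ PhiT Con Δ (X ∪ T) y :=
        iUnion_mono fun n => phiT_mono_x y subset_union_left n

end Aux

/-- (A, Con, |~_A) is an abstract nonmonotonic system. -/
theorem skeptical_is_abstract_nms {α : Type*} (Con : Set α → Prop) (Δ : Set (Set α × α))
    -- Con is a collection of finite subsets of A with ∅ ∈ Con, closed under
    -- subsets, containing every singleton
    (hCfin : ∀ X : Set α, Con X → X.Finite)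
    (hCempty : Con ∅)
    (hCsub : ∀ X Y : Set α, X ⊆ Y → Con Y → Con X)
    (hCsing : ∀ a : α, Con {a})
    -- Δ is a set of normal default rules, each a pair (X, a) with X ∈ Con
    (hDelta : ∀ p ∈ Δ, Con p.1) :
    -- (1) X ⊆ Y and Y ∈ Con imply X ∈ Con
    (∀ X Y : Set α, X ⊆ Y → Con Y → Con X) ∧
    -- (2) {a} ∈ Con for every a ∈ A
    (∀ a : α, Con {a}) ∧
    -- (3) X |~_A T implies X ∪ T ∈ Con
    (∀ X T : Set α, Con X → T.Finite → NmcS Con Δ X T → Con (X ∪ T)) ∧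
    -- (4) Y ⊆ X and X ∈ Con imply X |~_A Y
    (∀ X Y : Set α, Y ⊆ X → Con X → NmcS Con Δ X Y) ∧
    -- (5) cautious cut
    (∀ X T Y : Set α, Con X → Con T → Con Y →
      NmcS Con Δ X T → NmcS Con Δ (X ∪ T) Y → NmcS Con Δ X Y) ∧
    -- (6) X |~_A Y and X |~_A Z imply X |~_A Y ∪ Z
    (∀ X Y Z : Set α, Con X → Con Y → Con Z →
      NmcS Con Δ X Y → NmcS Con Δ X Z → NmcS Con Δ X (Y ∪ Z)) := by
  refine ⟨hCsub, hCsing, ?_, ?_, ?_, ?_⟩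
  · -- (3)
    intro X T hX hTfin hT
    have hXcons : IsCons Con X := fun W hW hfin => hCsub W X hW hX
    obtain ⟨y, hy⟩ := ext_exists hCfin hDelta hXcons
    have hXy : X ⊆ y := hy.2 ▸ x_subset_PhiT X y
    have hTy : T ⊆ y := fun b hb => hT b hb y hy
    exact hy.1 (X ∪ T) (Set.union_subset hXy hTy) ((hCfin X hX).union hTfin)
  · -- (4)
    intro X Y hYX hX b hb y hy
    exact (hy.2 ▸ x_subset_PhiT X y) (hYX hb)
  · -- (5)
    intro X T Y _ _ _ hXT hXTY b hb y hy
    have hTy : T ⊆ y := fun t ht => hXT t ht y hy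
    exact hXTY b hb y (ext_cut hCfin hDelta hy hTy)
  · -- (6)
    intro X Y Z _ _ _ hY hZ b hb
    rcases hb with hb | hb
    · exact hY b hb
    · exact hZ b hb
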